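/- Chernoff bound for blocked vertical columns (case d = 2): let 0 < δ < Q(Ω₀), 0 < δ₁ < δ, and suppose 0 < δ₂ < 1 and L ≥ 2ℓ − 1 are chosen so that 1 − δ₁ ≤ (1 − δ₂) Q(Λ₀(0, L)). Then for every u ∈ Z and every integer n > (1/2)( (1−δ₁)ℓ/(δ−δ₁) − 1 ), Q( Λ₁(u, δ, L, n)^c ) ≤ ℓ · exp{ −(δ₂² Q(Λ₀(0, L)) / 2) · ⌊(2n+1)/ℓ⌋ }. -/

import Mathlib

open MeasureTheory ProbabilityTheory Filter
open scoped ENNReal Topology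

namespace RWDPP

attribute [local instance] Classical.propDecidable


/-- Configuration space `Ω = {0,1}^{ℤ^d}`. -/
abbrev Cfg (d : ℕ) := (Fin d → ℤ) → Bool

/-- Canonical shift `T_y ω (x) = ω (x + y)`. -/
def shift (d : ℕ) (y : Fin d → ℤ) (ω : Cfg d) : Cfg d := fun x => ω (x + y)

/-- Embedding of `ℤ^d` into `ℝ^d` (with the Euclidean norm). -/
def toE (d : ℕ) (x : Fin d → ℤ) : EuclideanSpace ℝ (Fin d) := WithLp.toLp 2 (fun i => (x i : ℝ))

/-- Euclidean norm `|x|` of a lattice point. -/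
noncomputable def nrm (d : ℕ) (x : Fin d → ℤ) : ℝ := ‖toE d x‖

/-- Sup norm `|x|_∞` of a lattice point. -/
def nrmInf (d : ℕ) (x : Fin d → ℤ) : ℕ := Finset.univ.sup fun i => (x i).natAbs

/-- The `2d` unit vectors of `ℤ^d`. -/
def unitVecs (d : ℕ) : Set (Fin d → ℤ) :=
  {e | ∃ i : Fin d, e = Pi.single i 1 ∨ e = Pi.single i (-1)}

/-- `γ_e(ω) = inf {k ≥ 1 : ω(k e) = 1}`. -/
noncomputable def gamma (d : ℕ) (e : Fin d → ℤ) (ω : Cfg d) : ℕ :=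
  sInf {k : ℕ | 1 ≤ k ∧ ω ((k : ℤ) • e) = true}

/-- The nearest neighbor of `x` in direction `e`: `x + γ_e(T_x ω) e`. -/
noncomputable def nbr (d : ℕ) (ω : Cfg d) (x e : Fin d → ℤ) : Fin d → ℤ :=
  x + (gamma d e (shift d x ω) : ℤ) • e

/-- The set `N_x(ω)` of the `2d` nearest neighbors of `x`. -/
noncomputable def nbrs (d : ℕ) (ω : Cfg d) (x : Fin d → ℤ) : Set (Fin d → ℤ) :=
  {y | ∃ e ∈ unitVecs d, y = nbr d ω x e}

/-- `(p 0, …, p m)` is a `𝒫(ω)`-nearest neighbor path. -/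
def IsPath (d : ℕ) (ω : Cfg d) (p : ℕ → Fin d → ℤ) (m : ℕ) : Prop :=
  ω (p 0) = true ∧ ∀ k, 1 ≤ k → k ≤ m → p k ∈ nbrs d ω (p (k - 1))

/-- The event `Ω₀ = {ω : ω(0) = 1}`. -/
def Omega0 (d : ℕ) : Set (Cfg d) := {ω | ω 0 = true}

/-- The σ-field generated by the coordinates in `A`. -/
def coordSigma (d : ℕ) (A : Set (Fin d → ℤ)) : MeasurableSpace (Cfg d) :=
  MeasurableSpace.comap (fun ω (x : A) => ω x) inferInstance

/-- Assumptions (A1)–(A3) on the law `Q` of the discrete point process. -/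
structure Assumptions (d : ℕ) (Q : Measure (Cfg d)) : Prop where
  prob : IsProbabilityMeasure Q
  a1_pos : 0 < Q (Omega0 d)
  a1_lt : Q (Omega0 d) < 1
  a2 : ∃ ℓ : ℝ, 0 < ℓ ∧ ∀ A B : Set (Fin d → ℤ),
    (∀ x ∈ A, ∀ y ∈ B, ℓ ≤ nrm d (x - y)) →
      Indep (coordSigma d A) (coordSigma d B) Q
  a3 : ∀ y : Fin d → ℤ, MeasurePreserving (shift d y) Q Q

/-- The conditioned measure `P = Q(·|Ω₀)`. -/
noncomputable def condP (d : ℕ) (Q : Measure (Cfg d)) : Measure (Cfg d) := Q[|Omega0 d]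

/-- One-step transition probability of the RWDPP. -/
noncomputable def stepP (d : ℕ) (ω : Cfg d) (x y : Fin d → ℤ) : ℝ :=
  if y ∈ nbrs d ω x then 1 / (2 * d) else 0

/-- Discrete trajectory space. -/
abbrev Traj (d : ℕ) := ℕ → Fin d → ℤ

/-- `μ` is the family of quenched laws `P_ω^z` of the RWDPP in the environment `ω`:
`μ z` is a probability measure with `μ z (X₀ = z) = 1` under which `(X_n)` is the Markov
chain with transition probability `1/(2d)` to each nearest neighbor. -/
def IsQuenchedLaw (d : ℕ) (ω : Cfg d) (μ : (Fin d → ℤ) → Measure (Traj d)) : Prop :=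
  (∀ z, IsProbabilityMeasure (μ z)) ∧
  ∀ z, ω z = true → ∀ n : ℕ, ∀ x : Traj d,
    μ z {p | ∀ k ≤ n, p k = x k} =
      (if x 0 = z then 1 else 0) *
        ∏ k ∈ Finset.range n, ENNReal.ofReal (stepP d ω (x k) (x (k + 1)))

/-- `P(N_{t} - N_{s} = k)` for a rate-one Poisson process, `r = t - s`. -/
noncomputable def poissonProb (r : ℝ) (k : ℕ) : ℝ≥0∞ :=
  ENNReal.ofReal (Real.exp (-r) * r ^ k / (Nat.factorial k))

/-- `ν` is the law of (the path of) a rate-one Poisson process `(N_t)_{t ≥ 0}`. -/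
def IsPoissonPath (ν : Measure (ℝ → ℕ)) : Prop :=
  IsProbabilityMeasure ν ∧
  (∀ᵐ η ∂ν, Monotone η ∧ ∀ t : ℝ, t ≤ 0 → η t = 0) ∧
  ∀ m : ℕ, ∀ t : ℕ → ℝ, 0 ≤ t 0 → Monotone t → ∀ k : ℕ → ℕ,
    ν {η | ∀ i < m, η (t (i + 1)) - η (t i) = k i} =
      ∏ i ∈ Finset.range m, poissonProb (t (i + 1) - t i) (k i)

/-- The continuous-time walk `Y_t = X_{N_t}`, realized on the product of the trajectory
space of the discrete walk and the path space of the Poisson process. -/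
def Yt (d : ℕ) (q : Traj d × (ℝ → ℕ)) (t : ℝ) : Fin d → ℤ := q.1 (q.2 t)

/-- `τ_n = inf {t ≥ 0 : |Y_t - Y_0| ≥ n}`. -/
noncomputable def hitTime (d : ℕ) (n : ℕ) (q : Traj d × (ℝ → ℕ)) : ℝ :=
  sInf {t : ℝ | 0 ≤ t ∧ (n : ℝ) ≤ nrm d (Yt d q t - Yt d q 0)}

/-- `max_{x ∈ 𝒫(ω), |x| ≤ n} g x` (Euclidean balls). -/
noncomputable def maxOn (d : ℕ) (ω : Cfg d) (g : (Fin d → ℤ) → ℝ) (n : ℕ) : ℝ :=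
  sSup {r : ℝ | ∃ x, ω x = true ∧ nrm d x ≤ (n : ℝ) ∧ r = g x}

/-- `max_{x ∈ 𝒫(ω), |x|_∞ ≤ n} g x` (sup-norm boxes). -/
noncomputable def maxOnInf (d : ℕ) (ω : Cfg d) (g : (Fin d → ℤ) → ℝ) (n : ℕ) : ℝ :=
  sSup {r : ℝ | ∃ x, ω x = true ∧ nrmInf d x ≤ n ∧ r = g x}

/-- The `2d` unit vectors, as a finite set. -/
noncomputable def unitFinset (d : ℕ) : Finset (Fin d → ℤ) :=
  (Finset.univ.image fun i : Fin d => (Pi.single i 1 : Fin d → ℤ)) ∪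
    (Finset.univ.image fun i : Fin d => (Pi.single i (-1) : Fin d → ℤ))

/-- `x ↦ x + ψ x` is harmonic on `𝒫(ω)` for the RWDPP transition probability. -/
def IsHarmonicDeform (d : ℕ) (ω : Cfg d) (ψ : (Fin d → ℤ) → EuclideanSpace ℝ (Fin d)) : Prop :=
  ∀ x, ω x = true →
    (1 / (2 * (d : ℝ))) • ∑ e ∈ unitFinset d, (toE d (nbr d ω x e) + ψ (nbr d ω x e))
      = toE d x + ψ x

/-- `‖(χ(x,·) - χ(y,·)) 1{x ∈ 𝒫} 1{y ∈ N_x}‖_{L²(P)}²`. -/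
noncomputable def corrL2sq (d : ℕ) (P : Measure (Cfg d))
    (χ : (Fin d → ℤ) → Cfg d → EuclideanSpace ℝ (Fin d)) (x y : Fin d → ℤ) : ℝ≥0∞ :=
  ∫⁻ ω, ENNReal.ofReal
    (if ω x = true ∧ y ∈ nbrs d ω x then ‖χ x ω - χ y ω‖ ^ 2 else 0) ∂P

/-- Graph distance on `𝒫(ω)` (`⊤` if not connected). -/
noncomputable def graphDist (d : ℕ) (ω : Cfg d) (x y : Fin d → ℤ) : ℕ∞ :=
  sInf {m : ℕ∞ | ∃ k : ℕ, m = (k : ℕ∞) ∧ ∃ p : Traj d, p 0 = x ∧ p k = y ∧ IsPath d ω p k}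

/-- The unit vectors `e₁, e₂` of `ℤ²`. -/
def e1 : Fin 2 → ℤ := ![1, 0]
def e2 : Fin 2 → ℤ := ![0, 1]

/-- `Λ₀(u, L) = {ω : ω((u - j)e₂) = 1 for some 1 ≤ j ≤ L}`. -/
def Lam0 (u : ℤ) (L : ℕ) : Set (Cfg 2) :=
  {ω | ∃ j : ℕ, 1 ≤ j ∧ j ≤ L ∧ ω ((u - (j : ℤ)) • e2) = true}

/-- `Λ₁(u, δ, L, n) = {(2n+1)^{-1} Σ_{i=-n}^{n} 1_{Λ₀(u,L)} ∘ T_{i e₁} > 1 - δ}`. -/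
def Lam1 (u : ℤ) (δ : ℝ) (L n : ℕ) : Set (Cfg 2) :=
  {ω | (1 - δ) * (2 * (n : ℝ) + 1) <
    (Nat.card {i : ℤ | -(n : ℤ) ≤ i ∧ i ≤ (n : ℤ) ∧ shift 2 (i • e1) ω ∈ Lam0 u L} : ℝ)}

-- lemmas
lemma measurable_shift (y : Fin 2 → ℤ) : Measurable (shift 2 y) :=
  measurable_pi_lambda _ fun x => measurable_pi_apply (x + y)

lemma measurable_coord (x : Fin 2 → ℤ) : MeasurableSet {ω : Cfg 2 | ω x = true} := by
  have : {ω : Cfg 2 | ω x = true} = (fun ω : Cfg 2 => ω x) ⁻¹' {true} := rfl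
  rw [this]
  exact measurable_pi_apply x (measurableSet_singleton true)

lemma measurable_lam0 (u : ℤ) (L : ℕ) : MeasurableSet (Lam0 u L) := by
  have h : Lam0 u L = ⋃ j ∈ Set.Icc 1 L, {ω : Cfg 2 | ω ((u - (j:ℤ)) • e2) = true} := by
    ext ω; simp only [Lam0, Set.mem_Icc, Set.mem_iUnion, Set.mem_setOf_eq, exists_prop]; tauto
  rw [h]
  exact MeasurableSet.biUnion (Set.to_countable _) fun j _ => measurable_coord _

lemma coordSigma_mono {A B : Set (Fin 2 → ℤ)} (h : A ⊆ B) :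
    coordSigma 2 A ≤ coordSigma 2 B := by
  have hco : (fun ω (x : A) => ω x)
      = (fun (g : B → Bool) (x : A) => g (Set.inclusion h x)) ∘ (fun (ω : Cfg 2) (y : B) => ω y) := rfl
  rw [coordSigma, coordSigma, hco, ← MeasurableSpace.comap_comp]
  exact MeasurableSpace.comap_mono (Measurable.comap_le
    (measurable_pi_lambda _ fun x => measurable_pi_apply _))

lemma coordSigma_le (A : Set (Fin 2 → ℤ)) :
    coordSigma 2 A ≤ (inferInstance : MeasurableSpace (Cfg 2)) :=
  Measurable.comap_le (measurable_pi_lambda _ fun x => measurable_pi_apply _)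

def col (i : ℤ) : Set (Fin 2 → ℤ) := {x | x 0 = i}

def Ei (u : ℤ) (L : ℕ) (i : ℤ) : Set (Cfg 2) := (shift 2 (i • e1)) ⁻¹' (Lam0 u L)

lemma measurableSet_coord_coordSigma {A : Set (Fin 2 → ℤ)} {x} (hx : x ∈ A) :
    MeasurableSet[coordSigma 2 A] {ω : Cfg 2 | ω x = true} :=
  ⟨(fun g : A → Bool => g ⟨x, hx⟩) ⁻¹' {true},
    measurable_pi_apply (⟨x, hx⟩ : A) (measurableSet_singleton true), rfl⟩

lemma pt_mem_col (u i : ℤ) (j : ℕ) : ((u - (j:ℤ)) • e2 + i • e1) ∈ col i := by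
  show ((u - (j:ℤ)) • e2 + i • e1) 0 = i
  simp [e1, e2]

lemma Ei_meas_col (u : ℤ) (L : ℕ) (i : ℤ) :
    MeasurableSet[coordSigma 2 (col i)] (Ei u L i) := by
  have h : Ei u L i = ⋃ j ∈ Set.Icc 1 L, {ω : Cfg 2 | ω ((u - (j:ℤ)) • e2 + i • e1) = true} := by
    ext ω; simp only [Ei, Lam0, shift, Set.mem_Icc, Set.mem_preimage, Set.mem_iUnion,
      Set.mem_setOf_eq, exists_prop]; tauto
  rw [h]
  exact MeasurableSet.biUnion (Set.to_countable _)
    fun j _ => measurableSet_coord_coordSigma (pt_mem_col u i j)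

lemma Ei_meas (u : ℤ) (L : ℕ) (i : ℤ) : MeasurableSet (Ei u L i) :=
  (measurable_shift _) (measurable_lam0 u L)
lemma abs_coord_le_nrm (v : Fin 2 → ℤ) : |((v 0 : ℤ) : ℝ)| ≤ nrm 2 v := by
  rw [nrm, EuclideanSpace.norm_eq, show |((v 0:ℤ):ℝ)| = Real.sqrt (((v 0:ℤ):ℝ)^2) from (Real.sqrt_sq_eq_abs _).symm]
  apply Real.sqrt_le_sqrt
  rw [Fin.sum_univ_two]
  have : ∀ i, ‖toE 2 v i‖^2 = ((v i : ℤ):ℝ)^2 := by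
    intro i; rw [toE]; simp [sq_abs]
  rw [this 0, this 1]
  nlinarith [sq_nonneg ((v 1 : ℤ):ℝ)]

lemma prod_meas (Q : Measure (Cfg 2)) [IsProbabilityMeasure Q] (ℓ : ℕ)
    (hindep : ∀ A B : Set (Fin 2 → ℤ),
      (∀ x ∈ A, ∀ y ∈ B, (ℓ : ℝ) ≤ nrm 2 (x - y)) →
        Indep (coordSigma 2 A) (coordSigma 2 B) Q)
    (u : ℤ) (L : ℕ) (idx : ℕ → ℤ)
    (hidx : ∀ k k', k ≠ k' → (ℓ:ℝ) ≤ |(idx k : ℝ) - (idx k' : ℝ)|) :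
    ∀ v : Finset ℕ, Q (⋂ k ∈ v, (Ei u L (idx k))ᶜ) = ∏ k ∈ v, Q ((Ei u L (idx k))ᶜ) := by
  intro v
  induction v using Finset.induction_on with
  | empty => simp
  | @insert k v hk ih =>
    have hAB : Indep (coordSigma 2 (col (idx k))) (coordSigma 2 (⋃ k' ∈ (v : Set ℕ), col (idx k'))) Q := by
      apply hindep
      intro x hx y hy
      obtain ⟨k', hk', hyk'⟩ : ∃ k' ∈ v, y ∈ col (idx k') := by
        simpa using hy
      have hxy : ((x - y) 0 : ℤ) = idx k - idx k' := by
        have h1 : x 0 = idx k := hx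
        have h2 : y 0 = idx k' := hyk'
        simp [h1, h2]
      have habs := abs_coord_le_nrm (x - y)
      rw [hxy] at habs
      refine le_trans ?_ habs
      push_cast
      exact hidx k k' (fun h => hk (h ▸ hk'))
    have h1 : MeasurableSet[coordSigma 2 (col (idx k))] (Ei u L (idx k))ᶜ :=
      (Ei_meas_col u L (idx k)).compl
    have h2 : MeasurableSet[coordSigma 2 (⋃ k' ∈ (v : Set ℕ), col (idx k'))]
        (⋂ k' ∈ v, (Ei u L (idx k'))ᶜ) := by
      refine MeasurableSet.biInter v.countable_toSet fun k' hk' => ?_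
      exact coordSigma_mono (Set.subset_biUnion_of_mem (show k' ∈ (v : Set ℕ) from hk'))
        _ ((Ei_meas_col u L (idx k')).compl)
    rw [Finset.set_biInter_insert, (Indep_iff _ _ _).1 hAB _ _ h1 h2, ih, Finset.prod_insert hk]
lemma half_sq_le {x : ℝ} (h0 : 0 ≤ x) (h1 : x < 1) :
    x^2/2 ≤ x + (1-x)*Real.log (1-x) := by
  rcases eq_or_lt_of_le h0 with h|h0
  · simp [← h]
  set f : ℝ → ℝ := fun y => y + (1-y)*Real.log (1-y) - y^2/2 with hf
  have hder : ∀ y ∈ Set.Ioo (0:ℝ) x, HasDerivAt f (-(Real.log (1-y)) - y) y := by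
    intro y hy
    have h1y : (0:ℝ) < 1 - y := by nlinarith [hy.2]
    have hlog : HasDerivAt (fun y : ℝ => Real.log (1-y)) ((1-y)⁻¹ * (-1)) y := by
      have := (Real.hasDerivAt_log h1y.ne').comp y (((hasDerivAt_id y).const_sub 1))
      exact this
    have hmul : HasDerivAt (fun y : ℝ => (1-y)*Real.log (1-y))
        ((-1) * Real.log (1-y) + (1-y) * ((1-y)⁻¹ * (-1))) y :=
      (((hasDerivAt_id y).const_sub 1)).mul hlog
    have H : HasDerivAt f
        ((1 : ℝ) + ((-1) * Real.log (1-y) + (1-y) * ((1-y)⁻¹ * (-1))) - (↑2 * y^(2-1))/2) y :=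
      ((hasDerivAt_id y).add hmul).sub ((hasDerivAt_pow 2 y).div_const 2)
    convert H using 1
    field_simp
    ring
  have hcont : ContinuousOn f (Set.Icc 0 x) := by
    have h1y : ∀ y ∈ Set.Icc (0:ℝ) x, 1 - y ≠ 0 := by
      intro y hy; have := hy.2; intro hc; nlinarith
    apply ContinuousOn.sub
    · apply ContinuousOn.add continuousOn_id
      exact ContinuousOn.mul (by fun_prop) (ContinuousOn.log (by fun_prop) h1y)
    · fun_prop
  have hmono : MonotoneOn f (Set.Icc 0 x) := by
    apply monotoneOn_of_deriv_nonneg (convex_Icc 0 x) hcont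
    · intro y hy
      rw [interior_Icc] at hy
      exact ((hder y hy).differentiableAt).differentiableWithinAt
    · intro y hy
      rw [interior_Icc] at hy
      rw [(hder y hy).deriv]
      have h1y : (0:ℝ) < 1 - y := by nlinarith [hy.2]
      have := Real.log_le_sub_one_of_pos h1y
      linarith
  have := hmono (Set.left_mem_Icc.2 h0.le) (Set.right_mem_Icc.2 h0.le) h0.le
  simp only [hf, Real.log_one, sub_zero, mul_zero, mul_one] at this
  nlinarith [this]

lemma class_chernoff (Q : Measure (Cfg 2)) [IsProbabilityMeasure Q] (ℓ : ℕ)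
    (hindep : ∀ A B : Set (Fin 2 → ℤ),
      (∀ x ∈ A, ∀ y ∈ B, (ℓ : ℝ) ≤ nrm 2 (x - y)) →
        Indep (coordSigma 2 A) (coordSigma 2 B) Q)
    (hQ3 : ∀ y : Fin 2 → ℤ, MeasurePreserving (shift 2 y) Q Q)
    (u : ℤ) (L m : ℕ) (idx : ℕ → ℤ)
    (hidx : ∀ k k', k ≠ k' → (ℓ:ℝ) ≤ |(idx k : ℝ) - (idx k' : ℝ)|)
    {δ₂ : ℝ} (hδ₂0 : 0 < δ₂) (hδ₂1 : δ₂ < 1) :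
    Q {ω | (((Finset.range m).filter fun k => ω ∈ Ei u L (idx k)).card : ℝ)
          ≤ (1-δ₂) * (Q (Lam0 0 L)).toReal * m}
      ≤ ENNReal.ofReal (Real.exp (-(δ₂^2 * (Q (Lam0 0 L)).toReal / 2) * m)) := by
  classical
  set q : ℝ := (Q (Lam0 0 L)).toReal with hqdef
  have hQL1 : Q (Lam0 0 L) ≤ 1 := prob_le_one
  have hq0 : 0 ≤ q := ENNReal.toReal_nonneg
  have hq1 : q ≤ 1 := by
    rw [hqdef]
    exact ENNReal.toReal_le_of_le_ofReal zero_le_one (by simpa using hQL1)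
  set p : ℝ := 1 - q with hpdef
  have hp0 : 0 ≤ p := by linarith
  set t : ℝ := -Real.log (1-δ₂) with htdef
  have h1δ₂ : (0:ℝ) < 1 - δ₂ := by linarith
  have hexpt : Real.exp t = (1-δ₂)⁻¹ := by
    rw [htdef, Real.exp_neg, Real.exp_log h1δ₂]
  have ht0 : 0 < t := by
    rw [htdef]
    exact neg_pos.mpr (Real.log_neg h1δ₂ (by linarith))
  set c : ℝ := Real.exp t - 1 with hcdef
  have hc0 : 0 ≤ c := by
    have := Real.one_le_exp ht0.le
    linarith
  set C : ℝ≥0∞ := ENNReal.ofReal c with hCdef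
  set G : ℕ → Set (Cfg 2) := fun k => (Ei u L (idx k))ᶜ with hGdef
  have hGmeas : ∀ k, MeasurableSet (G k) := fun k => (Ei_meas u L (idx k)).compl
  -- each G k has measure ofReal p
  have hEiQ : ∀ i : ℤ, Q (Ei u L i) = Q (Lam0 0 L) := by
    intro i
    have hkey : ∀ j : ℕ, ((0:ℤ) - (j:ℤ)) • e2 + u • e2 = (u - (j:ℤ)) • e2 := by
      intro j; rw [← add_smul]; ring_nf
    have h2 : Lam0 u L = (shift 2 (u • e2)) ⁻¹' (Lam0 0 L) := by
      ext ω
      simp only [Lam0, Set.mem_preimage, Set.mem_setOf_eq, shift, hkey]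
    rw [Ei, (hQ3 (i • e1)).measure_preimage (measurable_lam0 u L).nullMeasurableSet,
      h2, (hQ3 (u • e2)).measure_preimage (measurable_lam0 0 L).nullMeasurableSet]
  have hGQ : ∀ k, Q (G k) = ENNReal.ofReal p := by
    intro k
    rw [hGdef]
    simp only
    rw [prob_compl_eq_one_sub (Ei_meas u L (idx k)), hEiQ]
    rw [show (1:ℝ≥0∞) = ENNReal.ofReal 1 from ENNReal.ofReal_one.symm]
    rw [← ENNReal.ofReal_toReal (a := Q (Lam0 0 L)) (by exact (lt_of_le_of_lt hQL1 ENNReal.one_lt_top).ne)]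
    rw [← ENNReal.ofReal_sub _ ENNReal.toReal_nonneg]
  -- product formula
  have hprod : ∀ v : Finset ℕ, Q (⋂ k ∈ v, G k) = (ENNReal.ofReal p) ^ v.card := by
    intro v
    rw [prod_meas Q ℓ hindep u L idx hidx v]
    rw [Finset.prod_congr rfl (fun k _ => hGQ k), Finset.prod_const]
  -- the exponential integral
  have hmeas_ind : ∀ k, Measurable fun ω => (G k).indicator (1 : Cfg 2 → ℝ≥0∞) ω :=
    fun k => measurable_one.indicator (hGmeas k)
  have key : ∫⁻ ω, ∏ k ∈ Finset.range m, (1 + C * (G k).indicator 1 ω) ∂Q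
      = (1 + C * ENNReal.ofReal p) ^ m := by
    have expand : ∀ ω, ∏ k ∈ Finset.range m, (1 + C * (G k).indicator 1 ω)
        = ∑ v ∈ (Finset.range m).powerset, C ^ v.card * (⋂ k ∈ v, G k).indicator 1 ω := by
      intro ω
      rw [show (fun k => (1:ℝ≥0∞) + C * (G k).indicator 1 ω)
            = fun k => (C * (G k).indicator 1 ω) + 1 from funext fun k => add_comm _ _]
      rw [Finset.prod_add]
      refine Finset.sum_congr rfl fun v hv => ?_
      rw [Finset.prod_const_one, mul_one]
      have hind : ∏ k ∈ v, (G k).indicator (1 : Cfg 2 → ℝ≥0∞) ω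
          = (⋂ k ∈ v, G k).indicator 1 ω := by
        by_cases h : ω ∈ ⋂ k ∈ v, G k
        · rw [Set.indicator_of_mem h]
          simp only [Set.mem_iInter] at h
          rw [Finset.prod_congr rfl fun k hk => Set.indicator_of_mem (h k hk) _]
          simp
        · rw [Set.indicator_of_notMem h]
          simp only [Set.mem_iInter, not_forall] at h
          obtain ⟨k, hk, hko⟩ := h
          exact Finset.prod_eq_zero hk (by rw [Set.indicator_of_notMem hko])
      calc ∏ k ∈ v, (C * (G k).indicator 1 ω)
          = C ^ v.card * ∏ k ∈ v, (G k).indicator 1 ω := by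
            rw [Finset.prod_mul_distrib, Finset.prod_const]
        _ = C ^ v.card * (⋂ k ∈ v, G k).indicator 1 ω := by rw [hind]
    calc ∫⁻ ω, ∏ k ∈ Finset.range m, (1 + C * (G k).indicator 1 ω) ∂Q
        = ∫⁻ ω, ∑ v ∈ (Finset.range m).powerset, C ^ v.card * (⋂ k ∈ v, G k).indicator 1 ω ∂Q := by
          exact lintegral_congr expand
      _ = ∑ v ∈ (Finset.range m).powerset, ∫⁻ ω, C ^ v.card * (⋂ k ∈ v, G k).indicator 1 ω ∂Q := by
          refine lintegral_finset_sum _ fun v hv => ?_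
          exact (measurable_one.indicator (Finset.measurableSet_biInter v
            fun k _ => hGmeas k)).const_mul _
      _ = ∑ v ∈ (Finset.range m).powerset, C ^ v.card * Q (⋂ k ∈ v, G k) := by
          refine Finset.sum_congr rfl fun v hv => ?_
          rw [lintegral_const_mul _ (measurable_one.indicator (Finset.measurableSet_biInter
            v fun k _ => hGmeas k))]
          rw [lintegral_indicator (Finset.measurableSet_biInter v fun k _ => hGmeas k)]
          simp
      _ = ∑ v ∈ (Finset.range m).powerset, (∏ k ∈ v, (C * ENNReal.ofReal p))
            * ∏ k ∈ Finset.range m \ v, (1:ℝ≥0∞) := by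
          refine Finset.sum_congr rfl fun v hv => ?_
          rw [hprod v, Finset.prod_const, Finset.prod_const_one, mul_one, mul_pow]
      _ = ∏ k ∈ Finset.range m, (C * ENNReal.ofReal p + 1) := (Finset.prod_add _ _ _).symm
      _ = (1 + C * ENNReal.ofReal p) ^ m := by
          rw [Finset.prod_const, Finset.card_range]
          ring
  -- Markov / conclusion
  set S : Cfg 2 → ℕ := fun ω => ((Finset.range m).filter fun k => ω ∈ Ei u L (idx k)).card
    with hSdef
  set Bad : Set (Cfg 2) := {ω | (S ω : ℝ) ≤ (1-δ₂) * q * m} with hBdef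
  have hSmeas : Measurable S := by
    have hrw : S = fun ω => ∑ k ∈ Finset.range m, if ω ∈ Ei u L (idx k) then 1 else 0 := by
      funext ω
      exact Finset.card_filter _ _
    rw [hrw]
    exact Finset.measurable_sum _ fun k _ =>
      Measurable.ite (Ei_meas u L (idx k)) measurable_const measurable_const
  have hBadMeas : MeasurableSet Bad := by
    have hrw : Bad = S ⁻¹' {j : ℕ | (j:ℝ) ≤ (1-δ₂)*q*m} := rfl
    rw [hrw]; exact hSmeas (Set.to_countable _).measurableSet
  set a : ℝ := (m:ℝ) - (1-δ₂)*q*m with hadef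
  have hpt : ∀ ω ∈ Bad, ENNReal.ofReal (Real.exp (t*a))
      ≤ ∏ k ∈ Finset.range m, (1 + C * (G k).indicator 1 ω) := by
    intro ω hω
    have hsplit : ∏ k ∈ Finset.range m, (1 + C * (G k).indicator 1 ω)
        = (1+C) ^ ((Finset.range m).filter fun k => ω ∈ G k).card := by
      have h1 : ∀ k ∈ (Finset.range m).filter (fun k => ω ∈ G k),
          (1 + C * (G k).indicator 1 ω) = 1 + C := by
        intro k hk
        rw [Set.indicator_of_mem (Finset.mem_filter.mp hk).2, Pi.one_apply, mul_one]
      have h2 : ∀ k ∈ (Finset.range m).filter (fun k => ¬ ω ∈ G k),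
          (1 + C * (G k).indicator 1 ω) = 1 := by
        intro k hk
        rw [Set.indicator_of_notMem (Finset.mem_filter.mp hk).2, mul_zero, add_zero]
      rw [← Finset.prod_filter_mul_prod_filter_not (Finset.range m) (fun k => ω ∈ G k),
        Finset.prod_congr rfl h1, Finset.prod_congr rfl h2, Finset.prod_const,
        Finset.prod_const_one, mul_one]
    have hKS : S ω + ((Finset.range m).filter fun k => ω ∈ G k).card = m := by
      have h := Finset.card_filter_add_card_filter_not
        (s := Finset.range m) (p := fun k => ω ∈ Ei u L (idx k))
      rw [Finset.card_range] at h
      convert h using 3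
      exact Finset.filter_congr (fun k _ => Iff.rfl)
    have haK : a ≤ (((Finset.range m).filter fun k => ω ∈ G k).card : ℝ) := by
      have hω' : (S ω : ℝ) ≤ (1-δ₂) * q * m := hω
      have : (S ω : ℝ) + (((Finset.range m).filter fun k => ω ∈ G k).card : ℝ) = m := by
        exact_mod_cast congrArg (Nat.cast : ℕ → ℝ) hKS
      rw [hadef]; linarith
    have h1C : (1:ℝ≥0∞) + C = ENNReal.ofReal (Real.exp t) := by
      rw [hCdef, show (1:ℝ≥0∞) = ENNReal.ofReal 1 from ENNReal.ofReal_one.symm,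
        ← ENNReal.ofReal_add zero_le_one hc0, hcdef]
      norm_num
    rw [hsplit, h1C, ← ENNReal.ofReal_pow (Real.exp_nonneg t), ← Real.exp_nat_mul]
    apply ENNReal.ofReal_le_ofReal
    apply Real.exp_le_exp.mpr
    nlinarith [ht0]
  have markov : ENNReal.ofReal (Real.exp (t*a)) * Q Bad ≤ (1 + C * ENNReal.ofReal p) ^ m := by
    rw [← key]
    calc ENNReal.ofReal (Real.exp (t*a)) * Q Bad
        = ∫⁻ ω, Bad.indicator (fun _ => ENNReal.ofReal (Real.exp (t*a))) ω ∂Q := by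
          rw [lintegral_indicator_const hBadMeas]
      _ ≤ ∫⁻ ω, ∏ k ∈ Finset.range m, (1 + C * (G k).indicator 1 ω) ∂Q := by
          refine lintegral_mono fun ω => ?_
          by_cases hω : ω ∈ Bad
          · rw [Set.indicator_of_mem hω]; exact hpt ω hω
          · rw [Set.indicator_of_notMem hω]; exact zero_le
  have hrw2 : (1 + C * ENNReal.ofReal p) ^ m = ENNReal.ofReal ((1+c*p)^m) := by
    have h1 : (1:ℝ≥0∞) + C * ENNReal.ofReal p = ENNReal.ofReal (1 + c*p) := by
      rw [hCdef, ← ENNReal.ofReal_mul hc0,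
        show (1:ℝ≥0∞) = ENNReal.ofReal 1 from ENNReal.ofReal_one.symm,
        ← ENNReal.ofReal_add zero_le_one (mul_nonneg hc0 hp0)]
    rw [h1, ← ENNReal.ofReal_pow (by positivity)]
  have hfin : Q Bad ≤ ENNReal.ofReal ((1+c*p)^m * Real.exp (-(t*a))) := by
    have hQeq : Q Bad = ENNReal.ofReal (Real.exp (t*a)) * Q Bad
        * ENNReal.ofReal (Real.exp (-(t*a))) := by
      rw [mul_comm (ENNReal.ofReal _) (Q Bad), mul_assoc,
        ← ENNReal.ofReal_mul (Real.exp_nonneg _), ← Real.exp_add]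
      norm_num
    rw [hQeq]
    calc ENNReal.ofReal (Real.exp (t*a)) * Q Bad * ENNReal.ofReal (Real.exp (-(t*a)))
        ≤ (1 + C * ENNReal.ofReal p) ^ m * ENNReal.ofReal (Real.exp (-(t*a))) :=
          mul_le_mul_left markov _
      _ = ENNReal.ofReal ((1+c*p)^m * Real.exp (-(t*a))) := by
          rw [hrw2, ← ENNReal.ofReal_mul (by positivity)]
  refine le_trans (le_of_eq ?_) (hfin.trans (ENNReal.ofReal_le_ofReal ?_))
  · rfl
  · -- real arithmetic
    have h1cp : 1 + c*p = Real.exp t * (1 - q*δ₂) := by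
      rw [hcdef, hexpt, hpdef]; field_simp; ring
    have hqd1 : (0:ℝ) ≤ 1 - q*δ₂ := by nlinarith
    have hb1 : (1+c*p)^m = Real.exp ((m:ℝ)*t) * (1-q*δ₂)^m := by
      rw [h1cp, mul_pow, Real.exp_nat_mul]
    have hb2 : (1-q*δ₂)^m ≤ Real.exp ((m:ℝ) * (-(q*δ₂))) := by
      rw [Real.exp_nat_mul]
      exact pow_le_pow_left₀ hqd1 (by nlinarith [Real.add_one_le_exp (-(q*δ₂))]) m
    calc (1+c*p)^m * Real.exp (-(t*a))
        = Real.exp ((m:ℝ)*t) * (1-q*δ₂)^m * Real.exp (-(t*a)) := by rw [hb1]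
      _ ≤ Real.exp ((m:ℝ)*t) * Real.exp ((m:ℝ) * (-(q*δ₂))) * Real.exp (-(t*a)) :=
          mul_le_mul_of_nonneg_right
            (mul_le_mul_of_nonneg_left hb2 (Real.exp_nonneg _)) (Real.exp_nonneg _)
      _ = Real.exp ((m:ℝ)*t + (m:ℝ) * (-(q*δ₂)) + (-(t*a))) := by
          rw [Real.exp_add, Real.exp_add]
      _ ≤ Real.exp (-(δ₂^2*q/2)*m) := by
          apply Real.exp_le_exp.mpr
          have hkey2 := half_sq_le hδ₂0.le hδ₂1
          have hqm : (0:ℝ) ≤ q * m := mul_nonneg hq0 (Nat.cast_nonneg m)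
          have hta : (m:ℝ)*t - t*a = -((1-δ₂) * Real.log (1-δ₂)) * (q*(m:ℝ)) := by
            rw [hadef, htdef]; ring
          nlinarith [mul_le_mul_of_nonneg_right hkey2 hqm]


/-- **Chernoff bound for blocked vertical columns, `d = 2`.** Under the
stated choices of `δ, δ₁, δ₂, L`, for every `u` and every
`n > ((1-δ₁)ℓ/(δ-δ₁) - 1)/2`,
`Q(Λ₁(u,δ,L,n)^c) ≤ ℓ exp(-(δ₂² Q(Λ₀(0,L))/2) ⌊(2n+1)/ℓ⌋)`. -/
theorem chernoff_blocked_columns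
    (Q : Measure (Cfg 2)) (hQ : Assumptions 2 Q)
    (ℓ : ℕ) (hℓ : 1 ≤ ℓ)
    (hindep : ∀ A B : Set (Fin 2 → ℤ),
      (∀ x ∈ A, ∀ y ∈ B, (ℓ : ℝ) ≤ nrm 2 (x - y)) →
        Indep (coordSigma 2 A) (coordSigma 2 B) Q)
    (δ δ₁ δ₂ : ℝ) (hδ0 : 0 < δ) (hδQ : δ < (Q (Omega0 2)).toReal)
    (hδ₁0 : 0 < δ₁) (hδ₁δ : δ₁ < δ) (hδ₂0 : 0 < δ₂) (hδ₂1 : δ₂ < 1)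
    (L : ℕ) (hL : 2 * ℓ - 1 ≤ L)
    (hchoice : 1 - δ₁ ≤ (1 - δ₂) * (Q (Lam0 0 L)).toReal) :
    ∀ u : ℤ, ∀ n : ℕ, ((1 - δ₁) * (ℓ : ℝ) / (δ - δ₁) - 1) / 2 < (n : ℝ) →
      Q (Lam1 u δ L n)ᶜ
        ≤ ENNReal.ofReal ((ℓ : ℝ) *
            Real.exp (-(δ₂ ^ 2 * (Q (Lam0 0 L)).toReal / 2) * ((2 * n + 1) / ℓ : ℕ))) := by
  classical
  haveI := hQ.prob
  intro u n hn
  set q : ℝ := (Q (Lam0 0 L)).toReal with hqdef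
  set m : ℕ := (2 * n + 1) / ℓ with hmdef
  have hℓpos : (0:ℝ) < ℓ := by exact_mod_cast hℓ
  have hℓ0 : (0:ℤ) < (ℓ:ℤ) := by exact_mod_cast hℓ
  set idx : ℕ → ℕ → ℤ := fun r k => -(n:ℤ) + r + k * ℓ with hidxdef
  have hsp : ∀ r, ∀ k k', k ≠ k' → (ℓ:ℝ) ≤ |(idx r k : ℝ) - (idx r k' : ℝ)| := by
    intro r k k' hne
    have hd : (idx r k : ℝ) - idx r k' = ((k:ℝ) - k') * ℓ := by
      rw [hidxdef]; push_cast; ring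
    rw [hd, abs_mul, abs_of_nonneg hℓpos.le]
    have h2 : ((k:ℤ) - k') ≠ 0 := sub_ne_zero.mpr (by exact_mod_cast hne)
    have h3 : (1:ℤ) ≤ |(k:ℤ) - (k':ℤ)| := Int.one_le_abs h2
    have h4 : (1:ℝ) ≤ |(k:ℝ) - (k':ℝ)| := by exact_mod_cast h3
    nlinarith
  set Bad : ℕ → Set (Cfg 2) := fun r =>
    {ω | (((Finset.range m).filter fun k => ω ∈ Ei u L (idx r k)).card : ℝ)
        ≤ (1-δ₂) * q * m} with hBaddef
  -- arithmetic preliminaries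
  have hδ1 : δ < 1 := by
    refine lt_of_lt_of_le hδQ ?_
    exact ENNReal.toReal_le_of_le_ofReal zero_le_one (by simpa using prob_le_one (μ := Q) (s := Omega0 2))
  have hq0 : 0 ≤ q := ENNReal.toReal_nonneg
  have hδδ₁ : (0:ℝ) < δ - δ₁ := by linarith
  have h2n1 : (1-δ₁) * ℓ < (δ - δ₁) * (2*(n:ℝ)+1) := by
    have h := (div_lt_iff₀ hδδ₁).mp (by linarith : (1-δ₁)*(ℓ:ℝ)/(δ-δ₁) < 2*(n:ℝ)+1)
    linarith
  have hml : 2*(n:ℝ)+1 - ((ℓ:ℝ) - 1) ≤ (ℓ:ℝ) * m := by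
    have h1 : ℓ * m + (2*n+1) % ℓ = 2*n+1 := Nat.div_add_mod (2*n+1) ℓ
    have h2 : (2*n+1) % ℓ ≤ ℓ - 1 := Nat.le_pred_of_lt (Nat.mod_lt _ (by omega))
    have h3 : (ℓ:ℝ) * m + (((2*n+1) % ℓ : ℕ):ℝ) = 2*(n:ℝ)+1 := by exact_mod_cast h1
    have h4 : (((2*n+1) % ℓ : ℕ):ℝ) ≤ (ℓ:ℝ) - 1 := by
      have h5 : (((2*n+1) % ℓ : ℕ):ℝ) ≤ ((ℓ - 1 : ℕ):ℝ) := by exact_mod_cast h2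
      have h6 : ((ℓ - 1 : ℕ):ℝ) = (ℓ:ℝ) - 1 := by
        rw [Nat.cast_sub hℓ]; norm_num
      linarith [h6 ▸ h5]
    linarith
  have hmain : (1-δ) * (2*(n:ℝ)+1) < (1-δ₁) * ((ℓ:ℝ) * m) := by
    have h7 : (1-δ₁) * (2*(n:ℝ)+1 - ((ℓ:ℝ) - 1)) ≤ (1-δ₁) * ((ℓ:ℝ)*m) :=
      mul_le_mul_of_nonneg_left hml (by linarith)
    nlinarith
  -- the inclusion into the union of bad class events
  have hincl : (Lam1 u δ L n)ᶜ ⊆ ⋃ r ∈ Finset.range ℓ, Bad r := by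
    intro ω hω
    simp only [Set.mem_compl_iff, Lam1, Set.mem_setOf_eq, not_lt] at hω
    have hsetEq : {i : ℤ | -(n:ℤ) ≤ i ∧ i ≤ (n:ℤ) ∧ shift 2 (i • e1) ω ∈ Lam0 u L}
        = ↑((Finset.Icc (-(n:ℤ)) n).filter fun i => ω ∈ Ei u L i) := by
      ext i
      simp only [Set.mem_setOf_eq, Finset.coe_filter, Finset.mem_Icc, Ei, Set.mem_preimage]
      tauto
    rw [hsetEq, Nat.card_coe_set_eq, Set.ncard_coe_finset] at hω
    by_contra hcon
    simp only [Set.mem_iUnion, not_exists] at hcon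
    have hgt : ∀ r ∈ Finset.range ℓ, (1-δ₂)*q*(m:ℝ) <
        (((Finset.range m).filter fun k => ω ∈ Ei u L (idx r k)).card : ℝ) := by
      intro r hr
      have h := hcon r hr
      simp only [hBaddef, Set.mem_setOf_eq, not_le] at h
      exact h
    set U : ℕ → Finset ℤ := fun r =>
      ((Finset.range m).filter fun k => ω ∈ Ei u L (idx r k)).image (idx r) with hUdef
    have hinj : ∀ r, Function.Injective (idx r) := by
      intro r k k' h
      have h2 : (k:ℤ) * ℓ = (k':ℤ) * ℓ := by
        rw [hidxdef] at h
        simp only at h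
        omega
      have := mul_right_cancel₀ (by omega : (ℓ:ℤ) ≠ 0) h2
      exact_mod_cast this
    have hUcard : ∀ r, (U r).card
        = ((Finset.range m).filter fun k => ω ∈ Ei u L (idx r k)).card :=
      fun r => Finset.card_image_of_injective _ (hinj r)
    have hUsub : ∀ r ∈ Finset.range ℓ,
        U r ⊆ (Finset.Icc (-(n:ℤ)) n).filter fun i => ω ∈ Ei u L i := by
      intro r hr i hi
      have hrℓ : r < ℓ := Finset.mem_range.mp hr
      simp only [hUdef, Finset.mem_image, Finset.mem_filter, Finset.mem_range] at hi
      obtain ⟨k, ⟨hkm, hkE⟩, rfl⟩ := hi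
      rw [Finset.mem_filter, Finset.mem_Icc]
      have hge : (0:ℤ) ≤ (r:ℤ) + k*ℓ := by positivity
      have h1 : ((k:ℤ)+1) * ℓ ≤ (m:ℤ) * ℓ := by
        have : ((k:ℤ)+1) ≤ m := by exact_mod_cast hkm
        exact mul_le_mul_of_nonneg_right this hℓ0.le
      have h2 : (m:ℤ) * ℓ ≤ 2*(n:ℤ)+1 := by
        have := Nat.div_mul_le_self (2*n+1) ℓ
        exact_mod_cast this
      have hrl : (r:ℤ) ≤ (ℓ:ℤ) - 1 := by omega
      refine ⟨⟨?_, ?_⟩, hkE⟩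
      · rw [hidxdef]; simp only; linarith
      · rw [hidxdef]; simp only; linarith
    have hmod : ∀ r k, r < ℓ → ((idx r k + n) % (ℓ:ℤ)) = r := by
      intro r k hr
      have hrw : idx r k + n = (r:ℤ) + (ℓ:ℤ) * k := by rw [hidxdef]; ring
      rw [hrw, Int.add_mul_emod_self_left]
      exact Int.emod_eq_of_lt (by positivity) (by exact_mod_cast hr)
    have hdisj : ∀ r ∈ Finset.range ℓ, ∀ r' ∈ Finset.range ℓ, r ≠ r' →
        Disjoint (U r) (U r') := by
      intro r hr r' hr' hne
      rw [Finset.disjoint_left]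
      intro i hi hi'
      simp only [hUdef, Finset.mem_image] at hi hi'
      obtain ⟨k, _, hk⟩ := hi
      obtain ⟨k', _, hk'⟩ := hi'
      apply hne
      have heq : ((idx r k + n) % (ℓ:ℤ)) = ((idx r' k' + n) % (ℓ:ℤ)) := by rw [hk, hk']
      rw [hmod r k (Finset.mem_range.mp hr), hmod r' k' (Finset.mem_range.mp hr')] at heq
      exact_mod_cast heq
    have hsum : ∑ r ∈ Finset.range ℓ, ((U r).card:ℝ)
        ≤ (((Finset.Icc (-(n:ℤ)) n).filter fun i => ω ∈ Ei u L i).card : ℝ) := by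
      have h1 : ∑ r ∈ Finset.range ℓ, (U r).card = ((Finset.range ℓ).biUnion U).card :=
        (Finset.card_biUnion hdisj).symm
      have h2 : ((Finset.range ℓ).biUnion U).card
          ≤ ((Finset.Icc (-(n:ℤ)) n).filter fun i => ω ∈ Ei u L i).card :=
        Finset.card_le_card (Finset.biUnion_subset.mpr hUsub)
      have := h1 ▸ h2
      push_cast
      exact_mod_cast this
    have hlb : (ℓ:ℝ) * ((1-δ₂)*q*(m:ℝ)) < ∑ r ∈ Finset.range ℓ, ((U r).card:ℝ) := by
      have h := Finset.sum_lt_sum_of_nonempty (s := Finset.range ℓ)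
        (Finset.nonempty_range_iff.mpr (by omega))
        (f := fun _ => (1-δ₂)*q*(m:ℝ)) (g := fun r => ((U r).card:ℝ))
        (fun r hr => by
          show (1-δ₂)*q*(m:ℝ) < ((U r).card:ℝ)
          rw [hUcard r]; exact hgt r hr)
      simpa [Finset.sum_const, Finset.card_range, nsmul_eq_mul] using h
    have hc2 : (1-δ₁) * ((ℓ:ℝ)*m) ≤ (ℓ:ℝ)*((1-δ₂)*q*(m:ℝ)) := by
      have hlm : (0:ℝ) ≤ (ℓ:ℝ)*m := by positivity
      nlinarith [mul_le_mul_of_nonneg_right hchoice hlm]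
    linarith [hmain, hsum, hlb, hω, hc2]
  calc Q (Lam1 u δ L n)ᶜ ≤ Q (⋃ r ∈ Finset.range ℓ, Bad r) := measure_mono hincl
    _ ≤ ∑ r ∈ Finset.range ℓ, Q (Bad r) := measure_biUnion_finset_le _ _
    _ ≤ ∑ _r ∈ Finset.range ℓ, ENNReal.ofReal (Real.exp (-(δ₂^2 * q / 2) * m)) := by
        refine Finset.sum_le_sum fun r _ => ?_
        have hcc := class_chernoff Q ℓ hindep hQ.a3 u L m (idx r) (hsp r) hδ₂0 hδ₂1
        rw [← hqdef] at hcc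
        exact hcc
    _ = ENNReal.ofReal ((ℓ:ℝ) * Real.exp (-(δ₂^2 * q / 2) * m)) := by
        rw [Finset.sum_const, Finset.card_range, nsmul_eq_mul,
          ENNReal.ofReal_mul (by positivity : (0:ℝ) ≤ (ℓ:ℝ)), ENNReal.ofReal_natCast]

end RWDPP
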